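/- Let p ≥ 2 be an integer and β > β_0 > β*(p), and let X = (X_1,…,X_n) be distributed according to the p-tensor Curie-Weiss model P_{β_0,p} on {−1,1}^n. Then lim_{n→∞} (1/n) log P_{β_0,p}(η_p(X̄_n) > β) = sup_{x ∈ η_p^{−1}((β,∞))} H_{β_0,p}(x) − sup_{x∈[−1,1]} H_{β_0,p}(x), where η_p^{−1}((β,∞)) = {t ∈ [−1,1] : η_p(t) > β}. (Note η_p(X̄_n) is the maximum pseudolikelihood estimator of the parameter.) -/

import Mathlib

open Real Set Filter

/-- `I(x) = ½[(1+x)log(1+x) + (1−x)log(1−x)]` (with `Real.log 0 = 0`). -/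
noncomputable def bahI (x : ℝ) : ℝ :=
  ((1 + x) * Real.log (1 + x) + (1 - x) * Real.log (1 - x)) / 2

/-- `H_{β,p}(x) = β xᵖ − I(x)`. -/
noncomputable def bahH (β : ℝ) (p : ℕ) (x : ℝ) : ℝ := β * x ^ p - bahI x

/-- `β*(p) = sup {β ≥ 0 : sup_{x∈[−1,1]} H_{β,p}(x) = 0}`. -/
noncomputable def betaStar (p : ℕ) : ℝ :=
  sSup {β : ℝ | 0 ≤ β ∧ sSup (bahH β p '' Set.Icc (-1 : ℝ) 1) = 0}

/-- inverse hyperbolic tangent. -/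
noncomputable def arctanh (x : ℝ) : ℝ := Real.log ((1 + x) / (1 - x)) / 2

/-- `η_p(t) = p⁻¹ t^{1−p} arctanh t` for `t ≠ 0`, and `η_p(0) = 0`. -/
noncomputable def etaFn (p : ℕ) (t : ℝ) : ℝ :=
  if t = 0 then 0 else (p : ℝ)⁻¹ * t ^ (1 - (p : ℤ)) * arctanh t

/-- The spin value of a Boolean coordinate: `true ↦ 1`, `false ↦ −1`. -/
noncomputable def spin (b : Bool) : ℝ := if b then 1 else -1

/-- The average magnetization `X̄ = n⁻¹ Σᵢ Xᵢ` of a configuration in `{−1,1}ⁿ`. -/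
noncomputable def mag {n : ℕ} (σ : Fin n → Bool) : ℝ := (∑ i, spin (σ i)) / n

/-- The unnormalized Curie–Weiss weight `exp(β n^{1−p} (Σᵢ xᵢ)ᵖ)` of a configuration. -/
noncomputable def cwWeight (β : ℝ) (p n : ℕ) (σ : Fin n → Bool) : ℝ :=
  Real.exp (β * (n : ℝ) ^ (1 - (p : ℤ)) * (∑ i, spin (σ i)) ^ p)

/-- The probability of the event `E` under the `p`-tensor Curie–Weiss model `P_{β,p}`
on `{−1,1}ⁿ` (the normalizations `2ⁿ Z_n(β,p)` cancel in this ratio). -/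
noncomputable def cwProb (β : ℝ) (p n : ℕ) (E : Set (Fin n → Bool)) : ℝ :=
  (∑ σ : Fin n → Bool, E.indicator (cwWeight β p n) σ)
    / ∑ σ : Fin n → Bool, cwWeight β p n σ

lemma continuous_bahI : Continuous bahI := by
  unfold bahI
  have h1 : Continuous (fun x : ℝ => (1 + x) * Real.log (1 + x)) :=
    Real.continuous_mul_log.comp (by continuity)
  have h2 : Continuous (fun x : ℝ => (1 - x) * Real.log (1 - x)) :=
    Real.continuous_mul_log.comp (by continuity)
  exact (h1.add h2).div_const 2

lemma continuous_bahH (β : ℝ) (p : ℕ) : Continuous (bahH β p) := by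
  unfold bahH
  exact ((continuous_const.mul (continuous_pow p)).sub continuous_bahI)

lemma mul_log_ge (y : ℝ) (hy : 0 ≤ y) : y - 1 ≤ y * Real.log y := by
  rcases eq_or_lt_of_le hy with h | h
  · simp [← h]
  · have := Real.log_le_sub_one_of_pos (x := y⁻¹) (by positivity)
    rw [Real.log_inv] at this
    have h2 := mul_le_mul_of_nonneg_left this hy
    rw [mul_sub, mul_inv_cancel₀ (ne_of_gt h)] at h2
    have h3 : y * -Real.log y = -(y * Real.log y) := by ring
    linarith

lemma bahI_nonneg {x : ℝ} (hx : x ∈ Set.Icc (-1:ℝ) 1) : 0 ≤ bahI x := by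
  obtain ⟨h1, h2⟩ := hx
  have a := mul_log_ge (1 + x) (by linarith)
  have b := mul_log_ge (1 - x) (by linarith)
  unfold bahI; linarith

lemma bahH_le {β : ℝ} (hβ : 0 ≤ β) (p : ℕ) {x : ℝ} (hx : x ∈ Set.Icc (-1:ℝ) 1) :
    bahH β p x ≤ β + 1 := by
  obtain ⟨h1, h2⟩ := hx
  have hxp : x ^ p ≤ 1 := by
    calc x ^ p ≤ |x ^ p| := le_abs_self _
    _ = |x| ^ p := abs_pow x p
    _ ≤ 1 := pow_le_one₀ (abs_nonneg x) (abs_le.mpr ⟨h1, h2⟩)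
  have a := mul_log_ge (1 + x) (by linarith)
  have b := mul_log_ge (1 - x) (by linarith)
  have : -1 ≤ bahI x := by unfold bahI; linarith
  have : β * x ^ p ≤ β := by nlinarith
  unfold bahH; linarith

lemma bddAbove_H_image (β : ℝ) (hβ : 0 ≤ β) (p : ℕ) (S : Set ℝ) (hS : S ⊆ Set.Icc (-1:ℝ) 1) :
    BddAbove (bahH β p '' S) := by
  refine ⟨β + 1, ?_⟩
  rintro y ⟨x, hx, rfl⟩
  exact bahH_le hβ p (hS hx)

lemma zero_mem_A (p : ℕ) :
    sSup (bahH 0 p '' Set.Icc (-1 : ℝ) 1) = 0 := by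
  apply le_antisymm
  · apply csSup_le ((Set.nonempty_Icc.mpr (by norm_num)).image _)
    rintro y ⟨x, hx, rfl⟩
    have := bahI_nonneg hx
    unfold bahH; linarith
  · apply le_csSup (bddAbove_H_image 0 le_rfl p _ subset_rfl)
    refine ⟨0, by norm_num, ?_⟩
    unfold bahH bahI
    norm_num

lemma betaStar_nonneg (p : ℕ) : 0 ≤ betaStar p := by
  unfold betaStar
  by_cases hb : BddAbove {β : ℝ | 0 ≤ β ∧ sSup (bahH β p '' Set.Icc (-1 : ℝ) 1) = 0}
  · exact le_csSup hb ⟨le_rfl, zero_mem_A p⟩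
  · rw [Real.sSup_of_not_bddAbove hb]

lemma etaFn_zero (p : ℕ) : etaFn p 0 = 0 := by simp [etaFn]

lemma etaFn_one (p : ℕ) : etaFn p 1 = 0 := by
  unfold etaFn arctanh
  norm_num

lemma etaFn_neg_one (p : ℕ) : etaFn p (-1) = 0 := by
  unfold etaFn arctanh
  norm_num

lemma etaFn_continuousAt (p : ℕ) {t : ℝ} (ht0 : t ≠ 0) (h1 : -1 < t) (h2 : t < 1) :
    ContinuousAt (etaFn p) t := by
  have hop : {y : ℝ | y ≠ 0} ∈ nhds t := isOpen_ne.mem_nhds ht0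
  have hev : ∀ᶠ y in nhds t, (fun y => (p : ℝ)⁻¹ * y ^ (1 - (p : ℤ)) * arctanh y) y = etaFn p y := by
    filter_upwards [hop] with y hy
    simp only [etaFn, if_neg hy]
  apply ContinuousAt.congr _ hev
  have hz : ContinuousAt (fun y : ℝ => y ^ (1 - (p : ℤ))) t := continuousAt_zpow₀ t _ (Or.inl ht0)
  have harc : ContinuousAt arctanh t := by
    unfold arctanh
    have hd : (1 : ℝ) - t ≠ 0 := by linarith
    have hq : ContinuousAt (fun y : ℝ => (1 + y) / (1 - y)) t :=
      ContinuousAt.div (by fun_prop) (by fun_prop) hd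
    have hne : (1 + t) / (1 - t) ≠ 0 := ne_of_gt (div_pos (by linarith) (by linarith))
    exact (ContinuousAt.log hq hne).div_const 2
  exact ((continuousAt_const.mul hz).mul harc)

lemma exists_mem_T (p : ℕ) (hp : 2 ≤ p) {β : ℝ} (hβ : 0 < β) :
    ∃ t : ℝ, 0 < t ∧ t < 1 ∧ β < etaFn p t := by
  set c : ℝ := p * β + 1 with hc
  have hppos : (0:ℝ) < p := by positivity
  have hcpos : 0 < c := by positivity
  set E : ℝ := Real.exp (2 * c) with hE
  have hE1 : 1 < E := by
    rw [hE]; calc (1:ℝ) = Real.exp 0 := (Real.exp_zero).symm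
    _ < Real.exp (2 * c) := Real.exp_lt_exp.mpr (by linarith)
  set t : ℝ := (E - 1) / (E + 1) with hT
  have hEpos : 0 < E + 1 := by linarith
  have ht0 : 0 < t := by apply div_pos <;> linarith
  have ht1 : t < 1 := by rw [div_lt_one hEpos]; linarith
  refine ⟨t, ht0, ht1, ?_⟩
  have harc : arctanh t = c := by
    unfold arctanh
    have h1t : (1:ℝ) + t = 2 * E / (E + 1) := by rw [hT]; field_simp; ring
    have h2t : (1:ℝ) - t = 2 / (E + 1) := by rw [hT]; field_simp; norm_num
    have h3 : (2 * E / (E + 1)) / (2 / (E + 1)) = E := by field_simp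
    rw [h1t, h2t, h3, hE, Real.log_exp]; ring
  have hne : t ≠ 0 := ne_of_gt ht0
  rw [etaFn, if_neg hne, harc]
  have hzp : (1:ℝ) ≤ t ^ (1 - (p : ℤ)) := by
    have h1 : t ^ (1 - (p : ℤ)) = (t ^ ((p : ℤ) - 1))⁻¹ := by
      rw [← zpow_neg]; ring_nf
    rw [h1]
    rw [one_le_inv₀ (by positivity)]
    calc t ^ ((p:ℤ) - 1) = t ^ ((p - 1 : ℕ) : ℤ) := by
          congr 1; omega
    _ = t ^ (p - 1 : ℕ) := zpow_natCast t _
    _ ≤ 1 := pow_le_one₀ ht0.le ht1.le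
  calc β = (p:ℝ)⁻¹ * 1 * ((p:ℝ) * β) := by field_simp
  _ < (p:ℝ)⁻¹ * t ^ (1 - (p:ℤ)) * c := by
      apply mul_lt_mul' (by apply mul_le_mul_of_nonneg_left hzp; positivity)
      · rw [hc]; linarith
      · positivity
      · positivity

section Binom

variable (n k : ℕ)

/-- the `j`-th term of the binomial expansion of `(k + (n-k))^n`. -/
def gTerm (j : ℕ) : ℕ := n.choose j * k ^ j * (n - k) ^ (n - j)

lemma gTerm_sum (hk : k ≤ n) : ∑ j ∈ Finset.range (n+1), gTerm n k j = n ^ n := by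
  have h := add_pow k (n - k) n
  rw [Nat.add_sub_cancel' hk] at h
  rw [h]
  apply Finset.sum_congr rfl
  intro j _
  unfold gTerm
  simp only [Nat.cast_id]
  ring

lemma gTerm_up {j : ℕ} (hk : k ≤ n) (hj : j < k) : gTerm n k j ≤ gTerm n k (j+1) := by
  have hjn : j < n := lt_of_lt_of_le hj hk
  refine Nat.le_of_mul_le_mul_left (c := j+1) ?_ (Nat.succ_pos j)
  have key : n.choose (j+1) * (j+1) = n.choose j * (n - j) := Nat.choose_succ_right_eq n j
  have hsub : n - j = (n - (j+1)) + 1 := by omega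
  calc (j+1) * gTerm n k j = (n.choose j * k ^ j * (n-k) ^ (n - (j+1))) * ((j+1) * (n-k)) := by
        unfold gTerm; rw [hsub]; ring
  _ ≤ (n.choose j * k ^ j * (n-k) ^ (n - (j+1))) * ((n-j) * k) := by
        apply Nat.mul_le_mul_left
        calc (j+1) * (n-k) ≤ k * (n-k) := Nat.mul_le_mul (by omega) le_rfl
        _ = (n-k) * k := Nat.mul_comm _ _
        _ ≤ (n - j) * k := Nat.mul_le_mul (by omega) le_rfl
  _ = (j+1) * gTerm n k (j+1) := by
        unfold gTerm
        have e : (j+1) * (n.choose (j+1) * k^(j+1) * (n-k)^(n-(j+1)))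
            = (n.choose (j+1) * (j+1)) * (k^(j+1) * (n-k)^(n-(j+1))) := by ring
        rw [e, key]; ring
lemma gTerm_down {j : ℕ} (hk : k ≤ j) (hj : j < n) : gTerm n k (j+1) ≤ gTerm n k j := by
  refine Nat.le_of_mul_le_mul_left (c := j+1) ?_ (Nat.succ_pos j)
  have key : n.choose (j+1) * (j+1) = n.choose j * (n - j) := Nat.choose_succ_right_eq n j
  have hsub : n - j = (n - (j+1)) + 1 := by omega
  calc (j+1) * gTerm n k (j+1) = (n.choose j * k ^ j * (n-k) ^ (n - (j+1))) * ((n-j) * k) := by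
        unfold gTerm
        have e : (j+1) * (n.choose (j+1) * k^(j+1) * (n-k)^(n-(j+1)))
            = (n.choose (j+1) * (j+1)) * (k^(j+1) * (n-k)^(n-(j+1))) := by ring
        rw [e, key]; ring
  _ ≤ (n.choose j * k ^ j * (n-k) ^ (n - (j+1))) * ((j+1) * (n-k)) := by
        apply Nat.mul_le_mul_left
        calc (n-j) * k ≤ (n-k) * (j+1) := Nat.mul_le_mul (by omega) (by omega)
        _ = (j+1) * (n-k) := Nat.mul_comm _ _
  _ = (j+1) * gTerm n k j := by
        unfold gTerm; rw [hsub]; ring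

lemma gTerm_le (hk : k ≤ n) {j : ℕ} (hj : j ≤ n) : gTerm n k j ≤ gTerm n k k := by
  rcases le_or_gt j k with h | h
  · -- j ≤ k : go up
    have main : ∀ i, i ≤ k → gTerm n k (k - i) ≤ gTerm n k k := by
      intro i
      induction i with
      | zero => simp
      | succ i ih =>
        intro hik
        calc gTerm n k (k - (i+1)) ≤ gTerm n k (k - (i+1) + 1) :=
              gTerm_up n k hk (by omega)
        _ = gTerm n k (k - i) := by congr 1; omega
        _ ≤ gTerm n k k := ih (by omega)
    have : j = k - (k - j) := by omega
    rw [this]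
    exact main (k - j) (by omega)
  · have main : ∀ i, k + i ≤ n → gTerm n k (k + i) ≤ gTerm n k k := by
      intro i
      induction i with
      | zero => simp
      | succ i ih =>
        intro hik
        calc gTerm n k (k + (i+1)) = gTerm n k ((k+i) + 1) := by ring_nf
        _ ≤ gTerm n k (k + i) := gTerm_down n k (by omega) (by omega)
        _ ≤ gTerm n k k := ih (by omega)
    have : j = k + (j - k) := by omega
    rw [this]
    exact main (j - k) (by omega)

lemma gTerm_main_le (hk : k ≤ n) : gTerm n k k ≤ n ^ n := by
  rw [← gTerm_sum n k hk]
  exact Finset.single_le_sum (fun i _ => Nat.zero_le _)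
    (Finset.mem_range.mpr (by omega))

lemma pow_le_gTerm (hk : k ≤ n) : n ^ n ≤ (n + 1) * gTerm n k k := by
  rw [← gTerm_sum n k hk]
  calc ∑ j ∈ Finset.range (n+1), gTerm n k j ≤ ∑ _j ∈ Finset.range (n+1), gTerm n k k :=
        Finset.sum_le_sum (fun j hj => gTerm_le n k hk (by simp at hj; omega))
  _ = (n+1) * gTerm n k k := by rw [Finset.sum_const, Finset.card_range, smul_eq_mul]

end Binom

lemma exp_cast_mul_log (a : ℕ) : Real.exp ((a:ℝ) * Real.log a) = (a:ℝ) ^ a := by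
  rcases Nat.eq_zero_or_pos a with h | h
  · simp [h]
  · have ha : (0:ℝ) < a := by exact_mod_cast h
    rw [← Real.log_pow, Real.exp_log (by positivity)]

lemma factor_log (a n : ℕ) (hn : 1 ≤ n) :
    (a:ℝ) * (Real.log (2 * a / n) - Real.log 2 + Real.log n) = (a:ℝ) * Real.log a := by
  rcases Nat.eq_zero_or_pos a with h | h
  · simp [h]
  · have ha : (0:ℝ) < a := by exact_mod_cast h
    have hn' : (0:ℝ) < n := by exact_mod_cast hn
    congr 1
    rw [show (2 * (a:ℝ) / n) = 2 * a / n from rfl, Real.log_div (by positivity) (by positivity),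
      Real.log_mul (by norm_num) (by positivity)]
    ring

/-- key identity relating `k^k (n-k)^(n-k)` to `bahI`. -/
lemma pow_mul_pow_eq (n k : ℕ) (hn : 1 ≤ n) (hk : k ≤ n) :
    (k:ℝ) ^ k * ((n - k : ℕ):ℝ) ^ (n - k)
      = Real.exp ((n:ℝ) * bahI ((2*k - n)/n) - n * Real.log 2 + n * Real.log n) := by
  have hn0 : (n:ℝ) ≠ 0 := by positivity
  set m : ℝ := (2*k - n)/n with hm
  have hnk : ((n - k : ℕ):ℝ) = (n:ℝ) - k := by
    rw [Nat.cast_sub hk]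
  have h1m : 1 + m = 2 * k / n := by rw [hm]; field_simp; ring
  have h2m : 1 - m = 2 * ((n:ℝ) - k) / n := by rw [hm]; field_simp; ring
  have e1 : (n:ℝ) * bahI m = (k:ℝ) * Real.log (2*k/n) + ((n:ℝ)-(k:ℝ)) * Real.log (2*((n:ℝ)-k)/n) := by
    rw [bahI, h1m, h2m]
    field_simp
  have e2 : (n:ℝ) * bahI m - n * Real.log 2 + n * Real.log n
      = (k:ℝ) * (Real.log (2*k/n) - Real.log 2 + Real.log n)
        + ((n:ℝ)-(k:ℝ)) * (Real.log (2*((n:ℝ)-k)/n) - Real.log 2 + Real.log n) := by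
    rw [e1]; ring
  rw [e2, factor_log k n hn, show ((n:ℝ) - (k:ℝ)) = ((n-k:ℕ):ℝ) from hnk.symm,
    factor_log (n-k) n hn, Real.exp_add, exp_cast_mul_log, exp_cast_mul_log]

/-- two-sided entropy bounds for binomial coefficients. -/
lemma choose_ge_exp (n k : ℕ) (hn : 1 ≤ n) (hk : k ≤ n) :
    Real.exp ((n:ℝ) * (Real.log 2 - bahI ((2*k - n)/n))) / (n+1) ≤ (n.choose k : ℝ) := by
  have h := pow_le_gTerm n k hk
  have hcast : ((n:ℝ)) ^ n ≤ ((n:ℝ)+1) * ((n.choose k : ℝ) * (k:ℝ)^k * ((n-k:ℕ):ℝ)^(n-k)) := by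
    exact_mod_cast h
  rw [mul_assoc (n.choose k : ℝ), pow_mul_pow_eq n k hn hk] at hcast
  have hnn : ((n:ℝ)) ^ n = Real.exp ((n:ℝ) * Real.log n) := (exp_cast_mul_log n).symm
  rw [hnn] at hcast
  rw [div_le_iff₀ (by positivity)]
  have hexp : Real.exp ((n:ℝ) * (Real.log 2 - bahI ((2*k - n)/n)))
      * Real.exp ((n:ℝ) * bahI ((2*k - n)/n) - n * Real.log 2 + n * Real.log n)
      = Real.exp ((n:ℝ) * Real.log n) := by
    rw [← Real.exp_add]; congr 1; ring
  nlinarith [Real.exp_pos ((n:ℝ) * bahI ((2*k - n)/n) - n * Real.log 2 + n * Real.log n),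
    Real.exp_pos ((n:ℝ) * (Real.log 2 - bahI ((2*k - n)/n)))]

lemma choose_le_exp (n k : ℕ) (hn : 1 ≤ n) (hk : k ≤ n) :
    (n.choose k : ℝ) ≤ Real.exp ((n:ℝ) * (Real.log 2 - bahI ((2*k - n)/n))) := by
  have h := gTerm_main_le n k hk
  have hcast : (n.choose k : ℝ) * (k:ℝ)^k * ((n-k:ℕ):ℝ)^(n-k) ≤ ((n:ℝ)) ^ n := by
    exact_mod_cast h
  rw [mul_assoc (n.choose k : ℝ), pow_mul_pow_eq n k hn hk,
    show ((n:ℝ)) ^ n = Real.exp ((n:ℝ) * Real.log n) from (exp_cast_mul_log n).symm] at hcast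
  have hexp : Real.exp ((n:ℝ) * (Real.log 2 - bahI ((2*k - n)/n)))
      * Real.exp ((n:ℝ) * bahI ((2*k - n)/n) - n * Real.log 2 + n * Real.log n)
      = Real.exp ((n:ℝ) * Real.log n) := by
    rw [← Real.exp_add]; congr 1; ring
  nlinarith [Real.exp_pos ((n:ℝ) * bahI ((2*k - n)/n) - n * Real.log 2 + n * Real.log n)]

/-- number of `+1` spins. -/
def cnt {n : ℕ} (σ : Fin n → Bool) : ℕ := (Finset.univ.filter (fun i => σ i = true)).card

lemma cnt_le {n : ℕ} (σ : Fin n → Bool) : cnt σ ≤ n := by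
  calc cnt σ ≤ Finset.univ.card := Finset.card_filter_le _ _
  _ = n := by simp

lemma card_cnt_eq (n k : ℕ) :
    (Finset.univ.filter (fun σ : Fin n → Bool => cnt σ = k)).card = n.choose k := by
  have h := Finset.card_powersetCard k (Finset.univ : Finset (Fin n))
  rw [Finset.card_univ, Fintype.card_fin] at h
  rw [← h]
  refine Finset.card_bij' (fun σ _ => Finset.univ.filter (fun i => σ i = true))
    (fun s _ => fun i => decide (i ∈ s)) ?_ ?_ ?_ ?_
  · intro σ hσ
    rw [Finset.mem_powersetCard]
    exact ⟨Finset.filter_subset _ _, by simpa [cnt] using (Finset.mem_filter.mp hσ).2⟩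
  · intro s hs
    rw [Finset.mem_powersetCard] at hs
    rw [Finset.mem_filter]
    refine ⟨Finset.mem_univ _, ?_⟩
    unfold cnt
    rw [← hs.2]
    congr 1
    ext i
    simp
  · intro σ hσ
    funext i
    simp
  · intro s hs
    ext i
    simp

lemma sum_spin {n : ℕ} (σ : Fin n → Bool) : ∑ i, spin (σ i) = 2 * (cnt σ : ℝ) - n := by
  have e : ∀ i, spin (σ i) = (if σ i = true then (2:ℝ) else 0) - 1 := by
    intro i; unfold spin; cases σ i <;> norm_num
  rw [Finset.sum_congr rfl (fun i _ => e i), Finset.sum_sub_distrib]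
  have : (∑ i : Fin n, if σ i = true then (2:ℝ) else 0)
      = 2 * ∑ i : Fin n, (if σ i = true then (1:ℝ) else 0) := by
    rw [Finset.mul_sum]
    exact Finset.sum_congr rfl (fun i _ => by split <;> norm_num)
  rw [this, Finset.sum_boole]
  simp [cnt]

lemma sum_fiber (n : ℕ) (g : ℕ → ℝ) :
    ∑ σ : Fin n → Bool, g (cnt σ) = ∑ k ∈ Finset.range (n+1), (n.choose k : ℝ) * g k := by
  rw [← Finset.sum_fiberwise_of_maps_to
    (t := Finset.range (n+1)) (g := fun σ : Fin n → Bool => cnt σ)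
    (fun σ _ => Finset.mem_range.mpr (Nat.lt_succ_of_le (cnt_le σ)))
    (fun σ => g (cnt σ))]
  apply Finset.sum_congr rfl
  intro k _
  calc ∑ σ ∈ Finset.univ.filter (fun σ : Fin n → Bool => cnt σ = k), g (cnt σ)
      = ∑ σ ∈ Finset.univ.filter (fun σ : Fin n → Bool => cnt σ = k), g k := by
        apply Finset.sum_congr rfl
        intro σ hσ
        rw [(Finset.mem_filter.mp hσ).2]
  _ = (n.choose k : ℝ) * g k := by
        rw [Finset.sum_const, card_cnt_eq, nsmul_eq_mul]

lemma mag_eq {n : ℕ} (σ : Fin n → Bool) : mag σ = (2 * (cnt σ : ℝ) - n) / n := by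
  unfold mag; rw [sum_spin]

lemma cwWeight_eq (β : ℝ) (p n : ℕ) (hn : 1 ≤ n) (σ : Fin n → Bool) :
    cwWeight β p n σ = Real.exp ((n:ℝ) * (β * ((2 * (cnt σ : ℝ) - n) / n) ^ p)) := by
  have hn0 : (n:ℝ) ≠ 0 := by positivity
  unfold cwWeight
  congr 1
  rw [sum_spin]
  have e2 : (n:ℝ) ^ (1 - (p:ℤ)) = (n:ℝ) / (n:ℝ) ^ p := by
    rw [zpow_sub₀ hn0, zpow_one, zpow_natCast]
  have key : (n:ℝ) * (β * ((2 * (cnt σ:ℝ) - n) / n) ^ p)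
      = β * (n:ℝ)^(1-(p:ℤ)) * (2*(cnt σ:ℝ) - n)^p := by
    rw [div_pow, e2]
    ring
  exact key.symm

/-- the total weight attached to magnetization level `k`. -/
noncomputable def Fterm (β₀ : ℝ) (p n k : ℕ) : ℝ :=
  (n.choose k : ℝ) * Real.exp ((n:ℝ) * (β₀ * ((2*(k:ℝ) - n)/n) ^ p))

lemma Fterm_nonneg (β₀ : ℝ) (p n k : ℕ) : 0 ≤ Fterm β₀ p n k := by
  unfold Fterm; positivity

lemma denom_eq (β₀ : ℝ) (p n : ℕ) (hn : 1 ≤ n) :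
    ∑ σ : Fin n → Bool, cwWeight β₀ p n σ = ∑ k ∈ Finset.range (n+1), Fterm β₀ p n k := by
  have e : ∀ σ : Fin n → Bool, cwWeight β₀ p n σ
      = (fun k : ℕ => Real.exp ((n:ℝ) * (β₀ * ((2*(k:ℝ) - n)/n) ^ p))) (cnt σ) := by
    intro σ; exact cwWeight_eq β₀ p n hn σ
  calc ∑ σ : Fin n → Bool, cwWeight β₀ p n σ
      = ∑ σ : Fin n → Bool, (fun k : ℕ => Real.exp ((n:ℝ) * (β₀ * ((2*(k:ℝ) - n)/n) ^ p))) (cnt σ) :=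
        Finset.sum_congr rfl (fun σ _ => e σ)
  _ = ∑ k ∈ Finset.range (n+1), (n.choose k : ℝ)
        * (fun k : ℕ => Real.exp ((n:ℝ) * (β₀ * ((2*(k:ℝ) - n)/n) ^ p))) k :=
        sum_fiber n (fun k : ℕ => Real.exp ((n:ℝ) * (β₀ * ((2*(k:ℝ) - n)/n) ^ p)))
  _ = ∑ k ∈ Finset.range (n+1), Fterm β₀ p n k := rfl

lemma numer_eq (β β₀ : ℝ) (p n : ℕ) (hn : 1 ≤ n) :
    ∑ σ : Fin n → Bool, ({σ : Fin n → Bool | β < etaFn p (mag σ)}).indicator (cwWeight β₀ p n) σ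
      = ∑ k ∈ (Finset.range (n+1)).filter (fun k : ℕ => β < etaFn p ((2*(k:ℝ) - n)/n)),
          Fterm β₀ p n k := by
  have e : ∀ σ : Fin n → Bool,
      ({σ : Fin n → Bool | β < etaFn p (mag σ)}).indicator (cwWeight β₀ p n) σ
      = (fun k : ℕ => if β < etaFn p ((2*(k:ℝ) - n)/n)
          then Real.exp ((n:ℝ) * (β₀ * ((2*(k:ℝ) - n)/n) ^ p)) else 0) (cnt σ) := by
    intro σ
    rw [Set.indicator_apply]
    simp only [Set.mem_setOf_eq, mag_eq σ]
    split_ifs with h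
    · exact cwWeight_eq β₀ p n hn σ
    · rfl
  calc ∑ σ : Fin n → Bool, ({σ : Fin n → Bool | β < etaFn p (mag σ)}).indicator (cwWeight β₀ p n) σ
      = ∑ σ : Fin n → Bool, (fun k : ℕ => if β < etaFn p ((2*(k:ℝ) - n)/n)
          then Real.exp ((n:ℝ) * (β₀ * ((2*(k:ℝ) - n)/n) ^ p)) else 0) (cnt σ) :=
        Finset.sum_congr rfl (fun σ _ => e σ)
  _ = ∑ k ∈ Finset.range (n+1), (n.choose k : ℝ) * (fun k : ℕ => if β < etaFn p ((2*(k:ℝ) - n)/n)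
          then Real.exp ((n:ℝ) * (β₀ * ((2*(k:ℝ) - n)/n) ^ p)) else 0) k :=
        sum_fiber n (fun k : ℕ => if β < etaFn p ((2*(k:ℝ) - n)/n)
          then Real.exp ((n:ℝ) * (β₀ * ((2*(k:ℝ) - n)/n) ^ p)) else 0)
  _ = ∑ k ∈ (Finset.range (n+1)).filter (fun k : ℕ => β < etaFn p ((2*(k:ℝ) - n)/n)),
        Fterm β₀ p n k := by
      rw [Finset.sum_filter]
      apply Finset.sum_congr rfl
      intro k _
      simp only [Fterm, mul_ite, mul_zero]

lemma Fterm_le (β₀ : ℝ) (p n k : ℕ) (hn : 1 ≤ n) (hk : k ≤ n) :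
    Fterm β₀ p n k ≤ Real.exp ((n:ℝ) * (Real.log 2 + bahH β₀ p ((2*(k:ℝ) - n)/n))) := by
  have h := choose_le_exp n k hn hk
  unfold Fterm
  calc (n.choose k : ℝ) * Real.exp ((n:ℝ) * (β₀ * ((2*(k:ℝ) - n)/n) ^ p))
      ≤ Real.exp ((n:ℝ) * (Real.log 2 - bahI ((2*(k:ℝ) - n)/n)))
        * Real.exp ((n:ℝ) * (β₀ * ((2*(k:ℝ) - n)/n) ^ p)) :=
        mul_le_mul_of_nonneg_right h (Real.exp_pos _).le
  _ = Real.exp ((n:ℝ) * (Real.log 2 + bahH β₀ p ((2*(k:ℝ) - n)/n))) := by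
        rw [← Real.exp_add]; congr 1; unfold bahH; ring

lemma Fterm_ge (β₀ : ℝ) (p n k : ℕ) (hn : 1 ≤ n) (hk : k ≤ n) :
    Real.exp ((n:ℝ) * (Real.log 2 + bahH β₀ p ((2*(k:ℝ) - n)/n))) / (n+1) ≤ Fterm β₀ p n k := by
  have h := choose_ge_exp n k hn hk
  unfold Fterm
  calc Real.exp ((n:ℝ) * (Real.log 2 + bahH β₀ p ((2*(k:ℝ) - n)/n))) / (n+1)
      = (Real.exp ((n:ℝ) * (Real.log 2 - bahI ((2*(k:ℝ) - n)/n))) / (n+1))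
        * Real.exp ((n:ℝ) * (β₀ * ((2*(k:ℝ) - n)/n) ^ p)) := by
        rw [div_mul_eq_mul_div, ← Real.exp_add]; congr 2; unfold bahH; ring
  _ ≤ (n.choose k : ℝ) * Real.exp ((n:ℝ) * (β₀ * ((2*(k:ℝ) - n)/n) ^ p)) :=
        mul_le_mul_of_nonneg_right h (Real.exp_pos _).le

lemma lattice_pt (x : ℝ) (hx2 : x ≤ 1) (hx0 : -1 ≤ x) (n : ℕ) (hn : 1 ≤ n) :
    ∃ k : ℕ, k ≤ n ∧ -1 ≤ (2*(k:ℝ) - n)/n ∧ x - 2/(n:ℝ) < (2*(k:ℝ) - n)/n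
      ∧ (2*(k:ℝ) - n)/n ≤ x := by
  have hn0 : (0:ℝ) < n := by exact_mod_cast hn
  set k : ℕ := ⌊(n:ℝ)*(1+x)/2⌋₊ with hkdef
  have h0 : (0:ℝ) ≤ (n:ℝ)*(1+x)/2 := by
    apply div_nonneg _ (by norm_num)
    apply mul_nonneg hn0.le (by linarith)
  have hkle : (k:ℝ) ≤ (n:ℝ)*(1+x)/2 := Nat.floor_le h0
  have hk2 : (n:ℝ)*(1+x)/2 - 1 < k := Nat.sub_one_lt_floor _
  have hkn : k ≤ n := by
    have : (k:ℝ) ≤ (n:ℝ) := by nlinarith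
    exact_mod_cast this
  refine ⟨k, hkn, ?_, ?_, ?_⟩
  · rw [le_div_iff₀ hn0]; push_cast; nlinarith [(Nat.cast_nonneg k : (0:ℝ) ≤ k)]
  · rw [lt_div_iff₀ hn0]
    have e : (2/(n:ℝ))*n = 2 := div_mul_cancel₀ 2 (ne_of_gt hn0)
    nlinarith
  · rw [div_le_iff₀ hn0]; nlinarith

lemma m_mem_Icc {n k : ℕ} (hn : 1 ≤ n) (hk : k ≤ n) :
    (2*(k:ℝ) - n)/n ∈ Set.Icc (-1:ℝ) 1 := by
  have hn0 : (0:ℝ) < n := by exact_mod_cast hn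
  have hkr : (k:ℝ) ≤ n := by exact_mod_cast hk
  constructor
  · rw [le_div_iff₀ hn0]; nlinarith [(Nat.cast_nonneg k : (0:ℝ) ≤ k)]
  · rw [div_le_iff₀ hn0]; nlinarith

lemma claim_T (p : ℕ) (hp : 2 ≤ p) (β β₀ : ℝ) (hβ : 0 < β) (hβ₀ : 0 < β₀) {ε : ℝ} (hε : 0 < ε) :
    ∀ᶠ n : ℕ in atTop, ∃ k : ℕ, k ≤ n ∧ β < etaFn p ((2*(k:ℝ)-n)/n)
      ∧ sSup (bahH β₀ p '' {t ∈ Set.Icc (-1:ℝ) 1 | β < etaFn p t}) - ε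
          < bahH β₀ p ((2*(k:ℝ)-n)/n) := by
  set T : Set ℝ := {t ∈ Set.Icc (-1:ℝ) 1 | β < etaFn p t} with hTdef
  set SE := sSup (bahH β₀ p '' T) with hSEdef
  obtain ⟨x, hxT, hxH⟩ : ∃ x ∈ T, SE - ε < bahH β₀ p x := by
    obtain ⟨y, hy, hy2⟩ := exists_lt_of_lt_csSup
      (Set.Nonempty.image _ (by
        obtain ⟨t0, ht00, ht01, ht0β⟩ := exists_mem_T p hp hβ
        exact ⟨t0, ⟨⟨by linarith, ht01.le⟩, ht0β⟩⟩))
      (sub_lt_self SE hε)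
    obtain ⟨x, hxT, rfl⟩ := hy
    exact ⟨x, hxT, hy2⟩
  obtain ⟨⟨hx1, hx2⟩, hxβ⟩ := hxT
  have hx0 : x ≠ 0 := by
    intro h; rw [h, etaFn_zero] at hxβ; linarith
  have hxne1 : x ≠ 1 := by
    intro h; rw [h, etaFn_one] at hxβ; linarith
  have hxnem1 : x ≠ -1 := by
    intro h; rw [h, etaFn_neg_one] at hxβ; linarith
  have hx1' : -1 < x := lt_of_le_of_ne hx1 (Ne.symm hxnem1)
  have hx2' : x < 1 := lt_of_le_of_ne hx2 hxne1
  have hcη : ContinuousAt (etaFn p) x := etaFn_continuousAt p hx0 hx1' hx2'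
  have hcH : ContinuousAt (bahH β₀ p) x := (continuous_bahH β₀ p).continuousAt
  have h1 : ∀ᶠ y in nhds x, β < etaFn p y := hcη.eventually (eventually_gt_nhds hxβ)
  have h2 : ∀ᶠ y in nhds x, SE - ε < bahH β₀ p y := hcH.eventually (eventually_gt_nhds hxH)
  obtain ⟨δ, hδ, hball⟩ := Metric.eventually_nhds_iff.mp (h1.and h2)
  have hev1 : ∀ᶠ n : ℕ in atTop, (2:ℝ)/n < δ :=
    (tendsto_const_div_atTop_nhds_zero_nat 2).eventually_lt_const hδ
  filter_upwards [hev1, eventually_ge_atTop 1] with n h2n hn1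
  obtain ⟨k, hk, _, hm1, hm2⟩ := lattice_pt x hx2 hx1 n hn1
  have hdist : dist ((2*(k:ℝ)-n)/n) x < δ := by
    rw [Real.dist_eq, abs_lt]
    constructor <;> nlinarith
  obtain ⟨hb1, hb2⟩ := hball hdist
  exact ⟨k, hk, hb1, hb2⟩

lemma claim_Icc (p : ℕ) (β₀ : ℝ) {ε : ℝ} (hε : 0 < ε) :
    ∀ᶠ n : ℕ in atTop, ∃ k : ℕ, k ≤ n ∧
      sSup (bahH β₀ p '' Set.Icc (-1:ℝ) 1) - ε < bahH β₀ p ((2*(k:ℝ)-n)/n) := by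
  set S := sSup (bahH β₀ p '' Set.Icc (-1:ℝ) 1) with hSdef
  obtain ⟨x₀, hx₀, hmax⟩ := isCompact_Icc.exists_isMaxOn (⟨0, by norm_num⟩ : (Set.Icc (-1:ℝ) 1).Nonempty)
    (continuous_bahH β₀ p).continuousOn
  have hSle : S ≤ bahH β₀ p x₀ := by
    apply csSup_le (Set.Nonempty.image _ ⟨x₀, hx₀⟩)
    rintro y ⟨z, hz, rfl⟩
    exact hmax hz
  have hxH : S - ε < bahH β₀ p x₀ := by linarith
  have hcH : ContinuousAt (bahH β₀ p) x₀ := (continuous_bahH β₀ p).continuousAt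
  have h2 : ∀ᶠ y in nhds x₀, S - ε < bahH β₀ p y := hcH.eventually (eventually_gt_nhds hxH)
  obtain ⟨δ, hδ, hball⟩ := Metric.eventually_nhds_iff.mp h2
  have hev1 : ∀ᶠ n : ℕ in atTop, (2:ℝ)/n < δ :=
    (tendsto_const_div_atTop_nhds_zero_nat 2).eventually_lt_const hδ
  filter_upwards [hev1, eventually_ge_atTop 1] with n h2n hn1
  obtain ⟨k, hk, _, hm1, hm2⟩ := lattice_pt x₀ hx₀.2 hx₀.1 n hn1
  have hdist : dist ((2*(k:ℝ)-n)/n) x₀ < δ := by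
    rw [Real.dist_eq, abs_lt]
    constructor <;> nlinarith
  exact ⟨k, hk, hball hdist⟩

lemma log_succ_div_tendsto : Tendsto (fun n : ℕ => Real.log (n+1) / n) atTop (nhds 0) := by
  have h1 : Tendsto (fun x : ℝ => Real.log x / x) atTop (nhds 0) :=
    Real.isLittleO_log_id_atTop.tendsto_div_nhds_zero
  have h2 : Tendsto (fun n : ℕ => ((n:ℝ)+1)) atTop atTop :=
    tendsto_atTop_add_const_right _ 1 tendsto_natCast_atTop_atTop
  have h3 : Tendsto (fun n : ℕ => Real.log ((n:ℝ)+1) / ((n:ℝ)+1)) atTop (nhds 0) := h1.comp h2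
  have h4 : Tendsto (fun n : ℕ => ((n:ℝ)+1)/(n:ℝ)) atTop (nhds 1) := by
    have h5 : Tendsto (fun n : ℕ => 1 + 1/(n:ℝ)) atTop (nhds (1+0)) :=
      tendsto_const_nhds.add tendsto_one_div_atTop_nhds_zero_nat
    rw [add_zero] at h5
    apply h5.congr'
    filter_upwards [eventually_ge_atTop 1] with n hn
    have hn0 : (n:ℝ) ≠ 0 := by positivity
    field_simp
  have h6 := h3.mul h4
  rw [zero_mul] at h6
  apply h6.congr'
  filter_upwards [eventually_ge_atTop 1] with n hn
  have hn0 : (n:ℝ) ≠ 0 := by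
    have : (1:ℝ) ≤ n := by exact_mod_cast hn
    linarith
  have hn10 : (n:ℝ) + 1 ≠ 0 := by positivity
  field_simp

/-- For `p ≥ 2` and `β > β₀ > β*(p)`, under the `p`-tensor Curie–Weiss model `P_{β₀,p}`,
the MPL estimator `η_p(X̄_n)` satisfies
`(1/n) log P_{β₀,p}(η_p(X̄_n) > β) → sup_{x ∈ η_p⁻¹((β,∞))} H_{β₀,p}(x) − sup_{[−1,1]} H_{β₀,p}`. -/
theorem statement15 (p : ℕ) (hp : 2 ≤ p) (β β₀ : ℝ) (h0 : betaStar p < β₀) (h1 : β₀ < β) :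
    Tendsto (fun n : ℕ =>
        (1 / (n : ℝ)) * Real.log (cwProb β₀ p n {σ : Fin n → Bool | β < etaFn p (mag σ)}))
      atTop
      (nhds (sSup (bahH β₀ p '' {t ∈ Set.Icc (-1 : ℝ) 1 | β < etaFn p t})
        - sSup (bahH β₀ p '' Set.Icc (-1 : ℝ) 1))) := by
  have hβ₀pos : 0 < β₀ := lt_of_le_of_lt (betaStar_nonneg p) h0
  have hβpos : 0 < β := lt_trans hβ₀pos h1
  set T : Set ℝ := {t ∈ Set.Icc (-1:ℝ) 1 | β < etaFn p t} with hTdef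
  set SE := sSup (bahH β₀ p '' T) with hSE
  set S := sSup (bahH β₀ p '' Set.Icc (-1:ℝ) 1) with hS
  have hTsub : T ⊆ Set.Icc (-1:ℝ) 1 := fun t ht => ht.1
  have hbddT := bddAbove_H_image β₀ hβ₀pos.le p T hTsub
  have hbddI := bddAbove_H_image β₀ hβ₀pos.le p _ (subset_refl (Set.Icc (-1:ℝ) 1))
  have hH_le_S : ∀ x ∈ Set.Icc (-1:ℝ) 1, bahH β₀ p x ≤ S :=
    fun x hx => le_csSup hbddI ⟨x, hx, rfl⟩
  have hH_le_SE : ∀ x ∈ T, bahH β₀ p x ≤ SE :=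
    fun x hx => le_csSup hbddT ⟨x, hx, rfl⟩
  rw [Metric.tendsto_nhds]
  intro ε hε
  have hε4 : 0 < ε/4 := by linarith
  have hev8 : ∀ᶠ n : ℕ in atTop, Real.log (n+1)/n < ε/8 :=
    log_succ_div_tendsto.eventually_lt_const (by linarith)
  filter_upwards [claim_T p hp β β₀ hβpos hβ₀pos hε4, claim_Icc p β₀ hε4, hev8,
    eventually_ge_atTop 1] with n hk1 hk2 hlogn hn1
  rw [← hTdef, ← hSE] at hk1
  rw [← hS] at hk2
  obtain ⟨k₁, hk₁n, hk₁β, hk₁H⟩ := hk1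
  obtain ⟨k₂, hk₂n, hk₂H⟩ := hk2
  have hn0 : (0:ℝ) < n := by exact_mod_cast hn1
  set Num := ∑ k ∈ (Finset.range (n+1)).filter
      (fun k : ℕ => β < etaFn p ((2*(k:ℝ) - n)/n)), Fterm β₀ p n k with hNum
  set Den := ∑ k ∈ Finset.range (n+1), Fterm β₀ p n k with hDen
  have hprob : cwProb β₀ p n {σ : Fin n → Bool | β < etaFn p (mag σ)} = Num/Den := by
    rw [cwProb, numer_eq β β₀ p n hn1, denom_eq β₀ p n hn1]
  -- numerator bounds
  have hNumLB : Real.exp ((n:ℝ)*(Real.log 2 + (SE - ε/4)))/((n:ℝ)+1) ≤ Num := by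
    have e3 : k₁ ∈ (Finset.range (n+1)).filter
        (fun k : ℕ => β < etaFn p ((2*(k:ℝ) - n)/n)) :=
      Finset.mem_filter.mpr ⟨Finset.mem_range.mpr (by omega), hk₁β⟩
    calc Real.exp ((n:ℝ)*(Real.log 2 + (SE - ε/4)))/((n:ℝ)+1)
        ≤ Real.exp ((n:ℝ)*(Real.log 2 + bahH β₀ p ((2*(k₁:ℝ) - n)/n)))/((n:ℝ)+1) := by
          gcongr <;> linarith
    _ ≤ Fterm β₀ p n k₁ := Fterm_ge β₀ p n k₁ hn1 hk₁n
    _ ≤ Num := Finset.single_le_sum (fun i _ => Fterm_nonneg β₀ p n i) e3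
  have hNumPos : 0 < Num := lt_of_lt_of_le (by positivity) hNumLB
  have hNumUB : Num ≤ ((n:ℝ)+1) * Real.exp ((n:ℝ)*(Real.log 2 + SE)) := by
    have step : ∀ k ∈ (Finset.range (n+1)).filter
        (fun k : ℕ => β < etaFn p ((2*(k:ℝ) - n)/n)),
        Fterm β₀ p n k ≤ Real.exp ((n:ℝ)*(Real.log 2 + SE)) := by
      intro k hk
      obtain ⟨hkr, hkβ⟩ := Finset.mem_filter.mp hk
      have hkn : k ≤ n := by
        have := Finset.mem_range.mp hkr; omega
      have hmT : ((2*(k:ℝ) - n)/n) ∈ T := ⟨m_mem_Icc hn1 hkn, hkβ⟩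
      calc Fterm β₀ p n k ≤ Real.exp ((n:ℝ)*(Real.log 2 + bahH β₀ p ((2*(k:ℝ) - n)/n))) :=
            Fterm_le β₀ p n k hn1 hkn
      _ ≤ Real.exp ((n:ℝ)*(Real.log 2 + SE)) := by
            gcongr
            exact hH_le_SE _ hmT
    calc Num ≤ ((Finset.range (n+1)).filter
          (fun k : ℕ => β < etaFn p ((2*(k:ℝ) - n)/n))).card
            • Real.exp ((n:ℝ)*(Real.log 2 + SE)) := Finset.sum_le_card_nsmul _ _ _ step
    _ ≤ ((n:ℝ)+1) * Real.exp ((n:ℝ)*(Real.log 2 + SE)) := by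
        rw [nsmul_eq_mul]
        have hcard : (((Finset.range (n+1)).filter
              (fun k : ℕ => β < etaFn p ((2*(k:ℝ) - n)/n))).card : ℝ) ≤ (n:ℝ)+1 := by
          calc (((Finset.range (n+1)).filter
              (fun k : ℕ => β < etaFn p ((2*(k:ℝ) - n)/n))).card : ℝ)
              ≤ ((Finset.range (n+1)).card : ℝ) := by
                exact_mod_cast Finset.card_filter_le _ _
          _ = (n:ℝ)+1 := by rw [Finset.card_range]; push_cast; ring
        exact mul_le_mul_of_nonneg_right hcard (Real.exp_pos _).le
  -- denominator bounds
  have hDenLB : Real.exp ((n:ℝ)*(Real.log 2 + (S - ε/4)))/((n:ℝ)+1) ≤ Den := by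
    calc Real.exp ((n:ℝ)*(Real.log 2 + (S - ε/4)))/((n:ℝ)+1)
        ≤ Real.exp ((n:ℝ)*(Real.log 2 + bahH β₀ p ((2*(k₂:ℝ) - n)/n)))/((n:ℝ)+1) := by
          gcongr <;> linarith
    _ ≤ Fterm β₀ p n k₂ := Fterm_ge β₀ p n k₂ hn1 hk₂n
    _ ≤ Den := Finset.single_le_sum (fun i _ => Fterm_nonneg β₀ p n i)
          (Finset.mem_range.mpr (by omega))
  have hDenPos : 0 < Den := lt_of_lt_of_le (by positivity) hDenLB
  have hDenUB : Den ≤ ((n:ℝ)+1) * Real.exp ((n:ℝ)*(Real.log 2 + S)) := by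
    have step : ∀ k ∈ Finset.range (n+1),
        Fterm β₀ p n k ≤ Real.exp ((n:ℝ)*(Real.log 2 + S)) := by
      intro k hk
      have hkn : k ≤ n := by
        have := Finset.mem_range.mp hk; omega
      calc Fterm β₀ p n k ≤ Real.exp ((n:ℝ)*(Real.log 2 + bahH β₀ p ((2*(k:ℝ) - n)/n))) :=
            Fterm_le β₀ p n k hn1 hkn
      _ ≤ Real.exp ((n:ℝ)*(Real.log 2 + S)) := by
            gcongr
            exact hH_le_S _ (m_mem_Icc hn1 hkn)
    calc Den ≤ (Finset.range (n+1)).card • Real.exp ((n:ℝ)*(Real.log 2 + S)) :=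
          Finset.sum_le_card_nsmul _ _ _ step
    _ = ((n:ℝ)+1) * Real.exp ((n:ℝ)*(Real.log 2 + S)) := by
        rw [nsmul_eq_mul, Finset.card_range]; push_cast; ring
  -- logarithm bounds
  have hn1pos : (0:ℝ) < (n:ℝ)+1 := by positivity
  have hLN_ub : Real.log Num ≤ Real.log ((n:ℝ)+1) + (n:ℝ)*(Real.log 2 + SE) := by
    calc Real.log Num ≤ Real.log (((n:ℝ)+1) * Real.exp ((n:ℝ)*(Real.log 2 + SE))) :=
          Real.log_le_log hNumPos hNumUB
    _ = Real.log ((n:ℝ)+1) + (n:ℝ)*(Real.log 2 + SE) := by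
        rw [Real.log_mul (ne_of_gt hn1pos) (Real.exp_ne_zero _), Real.log_exp]
  have hLN_lb : (n:ℝ)*(Real.log 2 + (SE - ε/4)) - Real.log ((n:ℝ)+1) ≤ Real.log Num := by
    calc (n:ℝ)*(Real.log 2 + (SE - ε/4)) - Real.log ((n:ℝ)+1)
        = Real.log (Real.exp ((n:ℝ)*(Real.log 2 + (SE - ε/4)))/((n:ℝ)+1)) := by
          rw [Real.log_div (Real.exp_ne_zero _) (ne_of_gt hn1pos), Real.log_exp]
    _ ≤ Real.log Num := Real.log_le_log (by positivity) hNumLB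
  have hLD_ub : Real.log Den ≤ Real.log ((n:ℝ)+1) + (n:ℝ)*(Real.log 2 + S) := by
    calc Real.log Den ≤ Real.log (((n:ℝ)+1) * Real.exp ((n:ℝ)*(Real.log 2 + S))) :=
          Real.log_le_log hDenPos hDenUB
    _ = Real.log ((n:ℝ)+1) + (n:ℝ)*(Real.log 2 + S) := by
        rw [Real.log_mul (ne_of_gt hn1pos) (Real.exp_ne_zero _), Real.log_exp]
  have hLD_lb : (n:ℝ)*(Real.log 2 + (S - ε/4)) - Real.log ((n:ℝ)+1) ≤ Real.log Den := by
    calc (n:ℝ)*(Real.log 2 + (S - ε/4)) - Real.log ((n:ℝ)+1)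
        = Real.log (Real.exp ((n:ℝ)*(Real.log 2 + (S - ε/4)))/((n:ℝ)+1)) := by
          rw [Real.log_div (Real.exp_ne_zero _) (ne_of_gt hn1pos), Real.log_exp]
    _ ≤ Real.log Den := Real.log_le_log (by positivity) hDenLB
  -- combine
  have hub : Real.log Num - Real.log Den ≤ (n:ℝ)*((SE - S) + ε/4) + 2*Real.log ((n:ℝ)+1) := by
    have e : (n:ℝ)*(Real.log 2 + SE) - (n:ℝ)*(Real.log 2 + (S - ε/4))
        = (n:ℝ)*((SE - S) + ε/4) := by ring
    linarith
  have hlb : (n:ℝ)*((SE - S) - ε/4) - 2*Real.log ((n:ℝ)+1) ≤ Real.log Num - Real.log Den := by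
    have e : (n:ℝ)*(Real.log 2 + (SE - ε/4)) - (n:ℝ)*(Real.log 2 + S)
        = (n:ℝ)*((SE - S) - ε/4) := by ring
    linarith
  have hfub : 1/(n:ℝ) * (Real.log Num - Real.log Den)
      ≤ (SE - S) + ε/4 + 2*(Real.log ((n:ℝ)+1)/(n:ℝ)) := by
    calc 1/(n:ℝ) * (Real.log Num - Real.log Den)
        ≤ 1/(n:ℝ) * ((n:ℝ)*((SE - S) + ε/4) + 2*Real.log ((n:ℝ)+1)) :=
          mul_le_mul_of_nonneg_left hub (by positivity)
    _ = (SE - S) + ε/4 + 2*(Real.log ((n:ℝ)+1)/(n:ℝ)) := by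
        field_simp
  have hflb : (SE - S) - ε/4 - 2*(Real.log ((n:ℝ)+1)/(n:ℝ))
      ≤ 1/(n:ℝ) * (Real.log Num - Real.log Den) := by
    calc (SE - S) - ε/4 - 2*(Real.log ((n:ℝ)+1)/(n:ℝ))
        = 1/(n:ℝ) * ((n:ℝ)*((SE - S) - ε/4) - 2*Real.log ((n:ℝ)+1)) := by
          field_simp
    _ ≤ 1/(n:ℝ) * (Real.log Num - Real.log Den) :=
          mul_le_mul_of_nonneg_left hlb (by positivity)
  rw [Real.dist_eq, hprob, Real.log_div (ne_of_gt hNumPos) (ne_of_gt hDenPos), abs_lt]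
  constructor
  · linarith
  · linarith
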